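/- Let G be a monotone finite DAG with n vertices. Then sum over vertices v of Z(v) / (Z_v + 2 I(v)/n) <= 1, i.e., the analytic Two Path mechanism M^A_{2p} defines a valid (sub)probability distribution. -/

import Mathlib

set_option linter.unusedSectionVars false
set_option linter.unusedVariables false


open Finset
open scoped Classical

noncomputable section

variable {V : Type*} [Fintype V] [DecidableEq V]

/-- The out-degree of `x` in the digraph with edge relation `E`. -/
def outdeg (E : V → V → Prop) [DecidableRel E] (x : V) : ℕ :=
  (Finset.univ.filter fun y => E x y).card

/-- The weight of a path `l = [v₀, v₁, …, vₘ]`: the product over the edges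
`(vᵢ, vᵢ₊₁)` of `1 / outdeg vᵢ`. -/
def pathWeight (E : V → V → Prop) [DecidableRel E] (l : List V) : ℝ :=
  ((l.zip l.tail).map fun p => 1 / (outdeg E p.1 : ℝ)).prod

/-- `l` is a simple directed path from `y` to `x`. -/
def IsPathList (E : V → V → Prop) (y x : V) (l : List V) : Prop :=
  l ≠ [] ∧ l.Chain' E ∧ l.head? = some y ∧ l.getLast? = some x ∧ l.Nodup

/-- The (finite) set of all simple directed paths from `y` to `x`. -/
def pathFinset (E : V → V → Prop) (y x : V) : Finset (List V) :=
  ((Finset.univ : Finset {l : List V // l.Nodup}).map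
      ⟨Subtype.val, Subtype.val_injective⟩).filter (IsPathList E y x)

/-- `infl E x y` : the influence `I(x, y)` of `x` on `y`, i.e. the sum over all
simple paths from `y` to `x` of the product of `1/outdeg` along the path.
(When `x = y` the only simple path is `[x]`, of weight `1`.) -/
def infl (E : V → V → Prop) [DecidableRel E] (x y : V) : ℝ :=
  ∑ l ∈ pathFinset E y x, pathWeight E l

/-- `totInfl E x = I(x) = ∑_y I(x, y)` : the total influence of `x`. -/
def totInfl (E : V → V → Prop) [DecidableRel E] (x : V) : ℝ :=
  ∑ y, infl E x y

/-- The digraph is acyclic. -/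
def Acyclic (E : V → V → Prop) : Prop := ∀ x, ¬ Relation.TransGen E x x

/-- The set of sinks (vertices with no out-edges). -/
def sinks (E : V → V → Prop) [DecidableRel E] : Finset V :=
  Finset.univ.filter fun r => outdeg E r = 0

end

noncomputable section
variable {V : Type*} [Fintype V] [DecidableEq V]

/-- The digraph is monotone: along every edge, influence strictly increases. -/
def MonotoneDigraph (E : V → V → Prop) [DecidableRel E] : Prop :=
  ∀ x y, E x y → totInfl E x < totInfl E y

/-- The graph obtained from `E` by removing all out-edges of `v`. -/
def remOut (E : V → V → Prop) (v : V) : V → V → Prop := fun a b => E a b ∧ a ≠ v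

instance (E : V → V → Prop) [DecidableRel E] (v : V) : DecidableRel (remOut E v) :=
  fun _ _ => instDecidableAnd

/-- `Z = ∑_{r sink} (I(r)/n)²`. -/
def Zval (E : V → V → Prop) [DecidableRel E] : ℝ :=
  ∑ r ∈ sinks E, (totInfl E r / (Fintype.card V : ℝ)) ^ 2

/-- `Z(v) = (I(v)/n)² − ∑_{u ∈ N(v)} I(v,u) (I(u)/n)²`, where `N(v)` is the set
of in-neighbours of `v`. -/
def Zfun (E : V → V → Prop) [DecidableRel E] (v : V) : ℝ :=
  (totInfl E v / (Fintype.card V : ℝ)) ^ 2 -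
    ∑ u ∈ Finset.univ.filter (fun u => E u v),
      infl E v u * (totInfl E u / (Fintype.card V : ℝ)) ^ 2

end

/- ############ AUXILIARY DEVELOPMENT ############ -/

noncomputable section TwoPathAux
variable {V : Type*} [Fintype V] [DecidableEq V]
namespace TwoPathAux

variable (E : V → V → Prop) [DecidableRel E]

/-! ### pathWeight basics -/

@[simp] lemma pathWeight_nil : pathWeight E ([] : List V) = 1 := rfl

@[simp] lemma pathWeight_singleton (a : V) : pathWeight E [a] = 1 := rfl

lemma pathWeight_cons_cons (a b : V) (t : List V) :
    pathWeight E (a :: b :: t) = 1 / (outdeg E a : ℝ) * pathWeight E (b :: t) := rfl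

lemma pathWeight_nonneg (l : List V) : 0 ≤ pathWeight E l := by
  induction l with
  | nil => simp
  | cons a t ih =>
    cases t with
    | nil => simp
    | cons b t' =>
      rw [pathWeight_cons_cons]
      exact mul_nonneg (by positivity) ih

lemma pathWeight_concat (l : List V) (hl : l ≠ []) (x : V) :
    pathWeight E (l ++ [x]) = pathWeight E l * (1 / (outdeg E (l.getLast hl) : ℝ)) := by
  induction l with
  | nil => exact absurd rfl hl
  | cons a t ih =>
    cases t with
    | nil => simp [pathWeight_cons_cons]
    | cons b t' =>
      have h2 : (b :: t') ≠ [] := by simp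
      show pathWeight E (a :: b :: (t' ++ [x])) = _
      rw [show a :: b :: (t' ++ [x]) = a :: ((b :: t') ++ [x]) from rfl] at *
      rw [show pathWeight E (a :: ((b :: t') ++ [x]))
            = 1 / (outdeg E a : ℝ) * pathWeight E ((b :: t') ++ [x]) from rfl,
        ih h2, pathWeight_cons_cons, List.getLast_cons h2]
      ring

lemma pathWeight_take_drop : ∀ (i : ℕ) (l : List V), i < l.length →
    pathWeight E l = pathWeight E (l.take (i+1)) * pathWeight E (l.drop i) := by
  intro i
  induction i with
  | zero =>
    intro l hl
    cases l with
    | nil => simp at hl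
    | cons a t => simp
  | succ i ih =>
    intro l hl
    cases l with
    | nil => simp at hl
    | cons a t =>
      cases t with
      | nil => simp at hl
      | cons b t' =>
        have hlen : i < (b :: t').length := by
          simpa [Nat.succ_lt_succ_iff] using hl
        have htake : (b :: t').take (i+1) ≠ [] := by simp
        rw [List.take_succ_cons, List.drop_succ_cons, pathWeight_cons_cons, ih _ hlen,
          List.take_succ_cons, pathWeight_cons_cons]
        ring

/-! ### pathFinset membership -/

lemma mem_pathFinset {y x : V} {l : List V} :
    l ∈ pathFinset E y x ↔ IsPathList E y x l := by
  constructor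
  · intro h; exact (Finset.mem_filter.1 h).2
  · intro h
    exact Finset.mem_filter.2
      ⟨Finset.mem_map.2 ⟨⟨l, h.2.2.2.2⟩, Finset.mem_univ _, rfl⟩, h⟩

lemma pathFinset_self (x : V) : pathFinset E x x = {[x]} := by
  ext l
  rw [mem_pathFinset, Finset.mem_singleton]
  constructor
  · rintro ⟨hne, _, hhead, hlast, hnodup⟩
    cases l with
    | nil => exact absurd rfl hne
    | cons a t =>
      have ha : a = x := by simpa using hhead
      cases t with
      | nil => simp [ha]
      | cons b t' =>
        exfalso
        have h2 : (b :: t') ≠ [] := by simp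
        have hlast' : (b :: t').getLast h2 = x := by
          have := List.getLast?_eq_getLast (l := a :: b :: t') (by simp)
          rw [this, Option.some_inj] at hlast
          rw [← hlast, List.getLast_cons h2]
        have hmem : x ∈ b :: t' := hlast' ▸ List.getLast_mem h2
        rw [List.nodup_cons] at hnodup
        exact hnodup.1 (ha ▸ hmem)
  · rintro rfl
    exact ⟨by simp, List.isChain_singleton x, rfl, rfl, by simp⟩

lemma infl_self (x : V) : infl E x x = 1 := by
  rw [infl, pathFinset_self]
  simp

lemma infl_nonneg (x y : V) : 0 ≤ infl E x y :=
  Finset.sum_nonneg fun l _ => pathWeight_nonneg E l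

lemma totInfl_nonneg (x : V) : 0 ≤ totInfl E x :=
  Finset.sum_nonneg fun y _ => infl_nonneg E x y

lemma one_le_totInfl (x : V) : 1 ≤ totInfl E x := by
  calc (1:ℝ) = infl E x x := (infl_self E x).symm
  _ ≤ totInfl E x := Finset.single_le_sum
      (f := fun y => infl E x y) (fun y _ => infl_nonneg E x y) (Finset.mem_univ x)

/-! ### chains and reachability -/

lemma chain'_reflTransGen_head : ∀ {l : List V}, l.Chain' E → ∀ {a b : V},
    l.head? = some a → b ∈ l → Relation.ReflTransGen E a b := by
  intro l
  induction l with
  | nil => intro _ a b _ hb; simp at hb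
  | cons c t ih =>
    intro hc a b ha hb
    have hac : c = a := by simpa using ha
    subst hac
    rcases List.mem_cons.1 hb with rfl | hb
    · exact Relation.ReflTransGen.refl
    · cases t with
      | nil => simp at hb
      | cons d t' =>
        have hedge : E c d := (List.isChain_cons_cons.1 hc).1
        have htail : (d :: t').Chain' E := (List.isChain_cons_cons.1 hc).2
        exact Relation.ReflTransGen.head hedge (ih htail rfl hb)

lemma chain'_reflTransGen_last : ∀ {l : List V}, l.Chain' E → ∀ {a b : V},
    l.getLast? = some b → a ∈ l → Relation.ReflTransGen E a b := by
  intro l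
  induction l with
  | nil => intro _ a b _ ha; simp at ha
  | cons c t ih =>
    intro hc a b hb ha
    cases t with
    | nil =>
      have : b = c := by simpa using hb.symm
      subst this
      have : a = b := by simpa using ha
      subst this
      exact Relation.ReflTransGen.refl
    | cons d t' =>
      have hedge : E c d := (List.isChain_cons_cons.1 hc).1
      have htail : (d :: t').Chain' E := (List.isChain_cons_cons.1 hc).2
      have hb' : (d :: t').getLast? = some b := by
        rwa [List.getLast?_cons_cons] at hb
      rcases List.mem_cons.1 ha with rfl | ha
      · exact Relation.ReflTransGen.head hedge
          (ih htail hb' List.mem_cons_self)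
      · exact ih htail hb' ha

lemma acyclic_ne_of_edge (h : Acyclic E) {a b : V} (e : E a b) : a ≠ b := by
  rintro rfl; exact h a (Relation.TransGen.single e)

end TwoPathAux
end TwoPathAux

noncomputable section Part2
variable {V : Type*} [Fintype V] [DecidableEq V]
namespace TwoPathAux
variable (E : V → V → Prop) [DecidableRel E]

lemma edge_pair_mem (h : Acyclic E) {u v : V} (e : E u v) :
    [u, v] ∈ pathFinset E u v := by
  rw [mem_pathFinset]
  exact ⟨by simp, List.isChain_pair.2 e, rfl, rfl, by simp [acyclic_ne_of_edge E h e]⟩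

lemma one_div_outdeg_le_infl (h : Acyclic E) {u v : V} (e : E u v) :
    1 / (outdeg E u : ℝ) ≤ infl E v u := by
  have hw : pathWeight E [u, v] = 1 / (outdeg E u : ℝ) := by
    rw [pathWeight_cons_cons]; simp
  calc 1/(outdeg E u:ℝ) = pathWeight E [u,v] := hw.symm
  _ ≤ infl E v u := Finset.single_le_sum (fun l _ => pathWeight_nonneg E l)
      (edge_pair_mem E h e)

lemma isPathList_length_one {y x : V} {l : List V} (h : IsPathList E y x l)
    (h1 : l.length = 1) : y = x ∧ l = [y] := by
  obtain ⟨a, rfl⟩ : ∃ a, l = [a] := List.length_eq_one_iff.1 h1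
  obtain ⟨-, -, hh, hl, -⟩ := h
  simp only [List.head?_cons, Option.some_inj] at hh
  simp only [List.getLast?_singleton, Option.some_inj] at hl
  subst hh; subst hl; exact ⟨rfl, rfl⟩

/-- Last-edge decomposition. -/
lemma infl_last_edge (h : Acyclic E) (v y : V) :
    infl E v y = (if y = v then 1 else 0)
      + ∑ u ∈ Finset.univ.filter (fun u => E u v),
          infl E u y * (1 / (outdeg E u : ℝ)) := by
  have hsplit := Finset.sum_filter_add_sum_filter_not (pathFinset E y v)
      (fun l => l.length = 1) (pathWeight E)
  rw [infl, ← hsplit]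
  have h1 : ∑ l ∈ (pathFinset E y v).filter (fun l => l.length = 1), pathWeight E l
      = (if y = v then 1 else 0) := by
    by_cases hyv : y = v
    · subst hyv
      rw [pathFinset_self, if_pos rfl]
      rw [Finset.filter_singleton]
      simp
    · rw [if_neg hyv]
      have : (pathFinset E y v).filter (fun l => l.length = 1) = ∅ := by
        rw [Finset.filter_eq_empty_iff]
        intro l hl hlen
        exact hyv ((isPathList_length_one E ((mem_pathFinset E).1 hl) hlen).1)
      rw [this, Finset.sum_empty]
  rw [h1]
  congr 1
  -- main bijection
  have hRHS : ∀ u ∈ Finset.univ.filter (fun u => E u v),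
      infl E u y * (1 / (outdeg E u : ℝ))
        = ∑ m ∈ pathFinset E y u, pathWeight E m * (1 / (outdeg E u : ℝ)) := by
    intro u _; rw [infl, Finset.sum_mul]
  rw [Finset.sum_congr rfl hRHS,
    ← Finset.sum_sigma (Finset.univ.filter (fun u => E u v)) (fun u => pathFinset E y u)
      (fun p => pathWeight E p.2 * (1 / (outdeg E p.1 : ℝ)))]
  refine Finset.sum_nbij'
    (i := fun l => (⟨l.dropLast.getLastD v, l.dropLast⟩ : (_ : V) × List V))
    (j := fun p => p.2 ++ [v]) ?_ ?_ ?_ ?_ ?_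
  · -- maps into sigma
    intro l hl
    obtain ⟨hl, hlen⟩ := Finset.mem_filter.1 hl
    obtain ⟨hne, hch, hhead, hlast, hnd⟩ := (mem_pathFinset E).1 hl
    have hlast' : l.getLast hne = v := by
      rw [List.getLast?_eq_getLast hne, Option.some_inj] at hlast; exact hlast
    have hsp : l.dropLast ++ [v] = l := by
      conv_rhs => rw [← List.dropLast_append_getLast hne, hlast']
    have hdne : l.dropLast ≠ [] := by
      intro hd
      apply hlen
      have := hsp; rw [hd] at this
      simp [← this]
    have hu : l.dropLast.getLastD v = l.dropLast.getLast hdne := by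
      rw [List.getLastD_eq_getLast?, List.getLast?_eq_getLast hdne]; rfl
    set u := l.dropLast.getLast hdne with hudef
    have hch' : (l.dropLast ++ [v]).Chain' E := by rw [hsp]; exact hch
    replace hch' := List.isChain_append.1 hch'
    have hEuv : E u v := by
      refine hch'.2.2 u ?_ v rfl
      rw [List.getLast?_eq_getLast hdne]
      exact congrArg some hudef.symm
    refine Finset.mem_sigma.2 ⟨?_, ?_⟩
    · rw [hu]; exact Finset.mem_filter.2 ⟨Finset.mem_univ _, hEuv⟩
    · rw [hu]
      refine (mem_pathFinset E).2 ⟨hdne, hch'.1, ?_, List.getLast?_eq_getLast hdne,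
        (List.dropLast_sublist l).nodup hnd⟩
      rw [← hsp, List.head?_append_of_ne_nil _ hdne] at hhead
      exact hhead
  · -- j maps back
    rintro ⟨u, m⟩ hp
    obtain ⟨hu, hm⟩ := Finset.mem_sigma.1 hp
    dsimp only at hu hm ⊢
    have hEuv : E u v := (Finset.mem_filter.1 hu).2
    obtain ⟨hmne, hmch, hmhead, hmlast, hmnd⟩ := (mem_pathFinset E).1 hm
    have hvm : v ∉ m := by
      intro hvm
      exact h v (Relation.TransGen.tail'
        (chain'_reflTransGen_last E hmch hmlast hvm) hEuv)
    refine Finset.mem_filter.2 ⟨(mem_pathFinset E).2 ⟨by simp, ?_, ?_, ?_, ?_⟩, ?_⟩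
    · refine List.isChain_append.2 ⟨hmch, List.isChain_singleton v, ?_⟩
      intro a ha b hb
      rw [hmlast] at ha
      simp only [Option.mem_def, List.head?_cons, Option.some_inj] at ha hb
      subst ha; subst hb
      exact hEuv
    · rw [List.head?_append_of_ne_nil _ hmne]; exact hmhead
    · exact List.getLast?_concat
    · exact List.nodup_append.2 ⟨hmnd, by simp, by
        intro a ham b hb hab
        simp only [List.mem_singleton] at hb
        subst hb; subst hab
        exact hvm ham⟩
    · simp only [List.length_append, List.length_singleton]
      have : 1 ≤ m.length := List.length_pos_iff.2 hmne
      omega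
  · -- left inverse
    intro l hl
    obtain ⟨hl, hlen⟩ := Finset.mem_filter.1 hl
    obtain ⟨hne, hch, hhead, hlast, hnd⟩ := (mem_pathFinset E).1 hl
    have hlast' : l.getLast hne = v := by
      rw [List.getLast?_eq_getLast hne, Option.some_inj] at hlast; exact hlast
    show l.dropLast ++ [v] = l
    conv_rhs => rw [← List.dropLast_append_getLast hne, hlast']
  · -- right inverse
    rintro ⟨u, m⟩ hp
    obtain ⟨hu, hm⟩ := Finset.mem_sigma.1 hp
    dsimp only at hu hm ⊢
    obtain ⟨hmne, -, -, hmlast, -⟩ := (mem_pathFinset E).1 hm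
    show (⟨(m ++ [v]).dropLast.getLastD v, (m ++ [v]).dropLast⟩ : (_ : V) × List V)
        = ⟨u, m⟩
    have h1 : (m ++ [v]).dropLast = m := List.dropLast_concat
    have h2 : m.getLastD v = u := by
      rw [List.getLastD_eq_getLast?, hmlast]; rfl
    rw [h1, h2]
  · -- weights
    intro l hl
    obtain ⟨hl, hlen⟩ := Finset.mem_filter.1 hl
    obtain ⟨hne, hch, hhead, hlast, hnd⟩ := (mem_pathFinset E).1 hl
    have hlast' : l.getLast hne = v := by
      rw [List.getLast?_eq_getLast hne, Option.some_inj] at hlast; exact hlast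
    have hsp : l.dropLast ++ [v] = l := by
      conv_rhs => rw [← List.dropLast_append_getLast hne, hlast']
    have hdne : l.dropLast ≠ [] := by
      intro hd
      apply hlen
      have := hsp; rw [hd] at this
      simp [← this]
    have hu : l.dropLast.getLastD v = l.dropLast.getLast hdne := by
      rw [List.getLastD_eq_getLast?, List.getLast?_eq_getLast hdne]; rfl
    show pathWeight E l = pathWeight E l.dropLast * (1 / (outdeg E (l.dropLast.getLastD v) : ℝ))
    rw [hu, ← pathWeight_concat E l.dropLast hdne v, hsp]

end TwoPathAux
end Part2

noncomputable section Part3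
variable {V : Type*} [Fintype V] [DecidableEq V]
namespace TwoPathAux
variable (E : V → V → Prop) [DecidableRel E]

/-- First-edge decomposition. -/
lemma infl_first_edge (h : Acyclic E) {x y : V} (hyx : y ≠ x) :
    infl E x y = ∑ w ∈ Finset.univ.filter (fun w => E y w),
        1 / (outdeg E y : ℝ) * infl E x w := by
  have hRHS : ∀ w ∈ Finset.univ.filter (fun w => E y w),
      1 / (outdeg E y : ℝ) * infl E x w
        = ∑ m ∈ pathFinset E w x, 1 / (outdeg E y : ℝ) * pathWeight E m := by
    intro w _; rw [infl, Finset.mul_sum]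
  rw [Finset.sum_congr rfl hRHS,
    ← Finset.sum_sigma (Finset.univ.filter (fun w => E y w)) (fun w => pathFinset E w x)
      (fun p => 1/(outdeg E y:ℝ) * pathWeight E p.2), infl]
  refine Finset.sum_nbij' (i := fun l => (⟨l.tail.headD x, l.tail⟩ : (_ : V) × List V))
    (j := fun p => y :: p.2) ?_ ?_ ?_ ?_ ?_
  · intro l hl
    obtain ⟨hne, hch, hhead, hlast, hnd⟩ := (mem_pathFinset E).1 hl
    obtain ⟨a, t, rfl⟩ : ∃ a t, l = a :: t := by
      cases l with
      | nil => exact absurd rfl hne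
      | cons a t => exact ⟨a, t, rfl⟩
    have hay : a = y := by simpa using hhead
    subst hay
    have htne : t ≠ [] := by
      rintro rfl
      exact hyx (by simpa using hlast)
    obtain ⟨b, t', rfl⟩ : ∃ b t', t = b :: t' := by
      cases t with
      | nil => exact absurd rfl htne
      | cons b t' => exact ⟨b, t', rfl⟩
    have hEyb : E a b := (List.isChain_cons_cons.1 hch).1
    refine Finset.mem_sigma.2 ⟨Finset.mem_filter.2 ⟨Finset.mem_univ _, ?_⟩, ?_⟩
    · simpa using hEyb
    · simp only [List.tail_cons, List.headD_cons]
      refine (mem_pathFinset E).2 ⟨by simp, (List.isChain_cons_cons.1 hch).2, rfl, ?_, 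
        (List.nodup_cons.1 hnd).2⟩
      rwa [List.getLast?_cons_cons] at hlast
  · rintro ⟨w, m⟩ hp
    obtain ⟨hw, hm⟩ := Finset.mem_sigma.1 hp
    dsimp only at hw hm ⊢
    have hEyw : E y w := (Finset.mem_filter.1 hw).2
    obtain ⟨hmne, hmch, hmhead, hmlast, hmnd⟩ := (mem_pathFinset E).1 hm
    have hym : y ∉ m := by
      intro hym
      exact h y (Relation.TransGen.head' hEyw
        (chain'_reflTransGen_head E hmch hmhead hym))
    refine (mem_pathFinset E).2 ⟨by simp, ?_, rfl, ?_, List.nodup_cons.2 ⟨hym, hmnd⟩⟩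
    · refine List.isChain_cons.2 ⟨?_, hmch⟩
      intro z hz
      rw [hmhead] at hz
      simp only [Option.mem_def, Option.some_inj] at hz
      subst hz; exact hEyw
    · obtain ⟨b, t', rfl⟩ : ∃ b t', m = b :: t' := by
        cases m with
        | nil => exact absurd rfl hmne
        | cons b t' => exact ⟨b, t', rfl⟩
      rwa [List.getLast?_cons_cons]
  · intro l hl
    obtain ⟨hne, hch, hhead, hlast, hnd⟩ := (mem_pathFinset E).1 hl
    show y :: l.tail = l
    exact List.cons_head?_tail hhead
  · rintro ⟨w, m⟩ hp
    obtain ⟨hw, hm⟩ := Finset.mem_sigma.1 hp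
    dsimp only at hw hm ⊢
    obtain ⟨hmne, -, hmhead, -, -⟩ := (mem_pathFinset E).1 hm
    show (⟨(y :: m).tail.headD x, (y :: m).tail⟩ : (_ : V) × List V) = ⟨w, m⟩
    simp only [List.tail_cons]
    have : m.headD x = w := by
      rw [List.headD_eq_head?, hmhead]; rfl
    rw [this]
  · intro l hl
    obtain ⟨hne, hch, hhead, hlast, hnd⟩ := (mem_pathFinset E).1 hl
    obtain ⟨a, t, rfl⟩ : ∃ a t, l = a :: t := by
      cases l with
      | nil => exact absurd rfl hne
      | cons a t => exact ⟨a, t, rfl⟩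
    have hay : a = y := by simpa using hhead
    subst hay
    have htne : t ≠ [] := by
      rintro rfl
      exact hyx (by simpa using hlast)
    obtain ⟨b, t', rfl⟩ : ∃ b t', t = b :: t' := by
      cases t with
      | nil => exact absurd rfl htne
      | cons b t' => exact ⟨b, t', rfl⟩
    show pathWeight E (a :: b :: t') = 1/(outdeg E a : ℝ) * pathWeight E (a :: b :: t').tail
    rw [List.tail_cons, pathWeight_cons_cons]

end TwoPathAux
end Part3

noncomputable section Part4
variable {V : Type*} [Fintype V] [DecidableEq V]
namespace TwoPathAux
variable (E : V → V → Prop) [DecidableRel E]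

lemma totInfl_rec (h : Acyclic E) (v : V) :
    totInfl E v = 1 + ∑ u ∈ Finset.univ.filter (fun u => E u v),
        totInfl E u * (1 / (outdeg E u : ℝ)) := by
  rw [totInfl, Finset.sum_congr rfl (fun y _ => infl_last_edge E h v y),
    Finset.sum_add_distrib]
  congr 1
  · simp
  · rw [Finset.sum_comm]
    refine Finset.sum_congr rfl ?_
    intro u _
    rw [totInfl, Finset.sum_mul]

private def revRel (E : V → V → Prop) : V → V → Prop := fun a b => Relation.TransGen E b a

lemma revRel_wf (h : Acyclic E) : WellFounded (revRel (V := V) E) := by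
  have htrans : IsTrans V (revRel E) :=
    ⟨fun a b c hab hbc => Relation.TransGen.trans hbc hab⟩
  have hirr : IsIrrefl V (revRel E) := ⟨fun a ha => h a ha⟩
  exact Finite.wellFounded_of_trans_of_irrefl _

lemma sum_out_one_div_outdeg_le_one (y : V) :
    ∑ _w ∈ Finset.univ.filter (fun w => E y w), 1/(outdeg E y : ℝ) ≤ 1 := by
  rw [Finset.sum_const]
  rcases Nat.eq_zero_or_pos (outdeg E y) with h0 | hpos
  · have : Finset.univ.filter (fun w => E y w) = ∅ := Finset.card_eq_zero.1 h0
    simp [this]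
  · have hcard : (Finset.univ.filter (fun w => E y w)).card = outdeg E y := rfl
    rw [hcard, nsmul_eq_mul, mul_one_div, div_self
      (Nat.cast_ne_zero.2 hpos.ne' : (outdeg E y : ℝ) ≠ 0)]

lemma infl_le_one (h : Acyclic E) (x : V) : ∀ y, infl E x y ≤ 1 := by
  intro y
  induction y using WellFounded.induction (revRel_wf E h) with
  | _ y ih =>
    by_cases hyx : y = x
    · subst hyx; rw [infl_self]
    · rw [infl_first_edge E h hyx]
      have hbound : ∀ w ∈ Finset.univ.filter (fun w => E y w),
          1/(outdeg E y:ℝ) * infl E x w ≤ 1/(outdeg E y:ℝ) := by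
        intro w hw
        have hEyw : E y w := (Finset.mem_filter.1 hw).2
        have := ih w (Relation.TransGen.single hEyw)
        calc 1/(outdeg E y:ℝ) * infl E x w ≤ 1/(outdeg E y:ℝ) * 1 :=
          mul_le_mul_of_nonneg_left this (by positivity)
        _ = 1/(outdeg E y:ℝ) := mul_one _
      exact le_trans (Finset.sum_le_sum hbound) (sum_out_one_div_outdeg_le_one E y)

lemma totInfl_le_card (h : Acyclic E) (x : V) :
    totInfl E x ≤ (Fintype.card V : ℝ) := by
  rw [totInfl]
  calc ∑ y, infl E x y ≤ ∑ _y : V, (1:ℝ) :=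
    Finset.sum_le_sum (fun y _ => infl_le_one E h x y)
  _ = (Fintype.card V : ℝ) := by simp

lemma sum_sinks_infl_le_one (h : Acyclic E) : ∀ v : V, ∑ r ∈ sinks E, infl E r v ≤ 1 := by
  intro v
  induction v using WellFounded.induction (revRel_wf E h) with
  | _ v ih =>
    by_cases hv : outdeg E v = 0
    · have hvmem : v ∈ sinks E := Finset.mem_filter.2 ⟨Finset.mem_univ _, hv⟩
      have hempty : Finset.univ.filter (fun w => E v w) = ∅ := Finset.card_eq_zero.1 hv
      have hzero : ∀ r ∈ sinks E, r ≠ v → infl E r v = 0 := by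
        intro r _ hrv
        rw [infl_first_edge E h (fun hh : v = r => hrv hh.symm), hempty, Finset.sum_empty]
      rw [Finset.sum_eq_single_of_mem v hvmem hzero, infl_self]
    · have hvnot : ∀ r ∈ sinks E, r ≠ v := by
        intro r hr
        rintro rfl
        exact hv (Finset.mem_filter.1 hr).2
      have hstep : ∀ r ∈ sinks E, infl E r v
          = ∑ w ∈ Finset.univ.filter (fun w => E v w), 1/(outdeg E v : ℝ) * infl E r w :=
        fun r hr => infl_first_edge E h (fun hvr : v = r => hvnot r hr hvr.symm)
      rw [Finset.sum_congr rfl hstep, Finset.sum_comm]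
      have hbound : ∀ w ∈ Finset.univ.filter (fun w => E v w),
          ∑ r ∈ sinks E, 1/(outdeg E v : ℝ) * infl E r w ≤ 1/(outdeg E v : ℝ) := by
        intro w hw
        have hEvw : E v w := (Finset.mem_filter.1 hw).2
        rw [← Finset.mul_sum]
        calc 1/(outdeg E v:ℝ) * ∑ r ∈ sinks E, infl E r w
            ≤ 1/(outdeg E v:ℝ) * 1 :=
          mul_le_mul_of_nonneg_left (ih w (Relation.TransGen.single hEvw)) (by positivity)
        _ = 1/(outdeg E v:ℝ) := mul_one _
      exact le_trans (Finset.sum_le_sum hbound) (sum_out_one_div_outdeg_le_one E v)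

end TwoPathAux
end Part4

noncomputable section Part5
variable {V : Type*} [Fintype V] [DecidableEq V]
namespace TwoPathAux
variable (E : V → V → Prop) [DecidableRel E]

def Wfun (v : V) : ℝ :=
  (totInfl E v / (Fintype.card V : ℝ))^2 -
    ∑ u ∈ Finset.univ.filter (fun u => E u v),
      1/(outdeg E u : ℝ) * (totInfl E u / (Fintype.card V : ℝ))^2

lemma Zfun_le_Wfun (h : Acyclic E) (v : V) : Zfun E v ≤ Wfun E v := by
  rw [Zfun, Wfun]
  apply sub_le_sub_left
  apply Finset.sum_le_sum
  intro u hu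
  have hEuv : E u v := (Finset.mem_filter.1 hu).2
  exact mul_le_mul_of_nonneg_right (one_div_outdeg_le_infl E h hEuv) (sq_nonneg _)

lemma Wfun_nonneg (h : Acyclic E) (hm : MonotoneDigraph E) (v : V) : 0 ≤ Wfun E v := by
  rw [Wfun, sub_nonneg]
  set n : ℝ := (Fintype.card V : ℝ) with hndef
  have hn : 0 < n := by
    rw [hndef]
    exact_mod_cast Fintype.card_pos_iff.2 ⟨v⟩
  have key : ∀ u ∈ Finset.univ.filter (fun u => E u v),
      1/(outdeg E u : ℝ) * (totInfl E u / n)^2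
        ≤ (totInfl E v / n) * (totInfl E u * (1/(outdeg E u : ℝ)) / n) := by
    intro u hu
    have hEuv := (Finset.mem_filter.1 hu).2
    have h1 : totInfl E u ≤ totInfl E v := (hm u v hEuv).le
    have h2 : 0 ≤ totInfl E u := totInfl_nonneg E u
    have hd : 0 ≤ 1/(outdeg E u:ℝ) := by positivity
    have hsq : (totInfl E u / n)^2 ≤ (totInfl E v / n) * (totInfl E u / n) := by
      rw [sq]
      apply mul_le_mul_of_nonneg_right _ (by positivity)
      gcongr
    calc 1/(outdeg E u : ℝ) * (totInfl E u / n)^2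
        ≤ 1/(outdeg E u : ℝ) * ((totInfl E v / n) * (totInfl E u / n)) :=
          mul_le_mul_of_nonneg_left hsq hd
    _ = (totInfl E v / n) * (totInfl E u * (1/(outdeg E u : ℝ)) / n) := by
          field_simp
  calc ∑ u ∈ Finset.univ.filter (fun u => E u v), 1/(outdeg E u : ℝ) * (totInfl E u / n)^2
      ≤ ∑ u ∈ Finset.univ.filter (fun u => E u v),
          (totInfl E v / n) * (totInfl E u * (1/(outdeg E u : ℝ)) / n) :=
        Finset.sum_le_sum key
  _ = (totInfl E v / n) *
        ((∑ u ∈ Finset.univ.filter (fun u => E u v), totInfl E u * (1/(outdeg E u : ℝ))) / n) := by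
        rw [← Finset.mul_sum, ← Finset.sum_div]
  _ = (totInfl E v / n) * ((totInfl E v - 1) / n) := by
        have := totInfl_rec E h v
        have heq : ∑ u ∈ Finset.univ.filter (fun u => E u v), totInfl E u * (1/(outdeg E u : ℝ))
            = totInfl E v - 1 := by linarith
        rw [heq]
  _ ≤ (totInfl E v / n) * (totInfl E v / n) := by
        have h0 : 0 ≤ totInfl E v / n := div_nonneg (totInfl_nonneg E v) hn.le
        apply mul_le_mul_of_nonneg_left _ h0
        gcongr
        linarith
  _ = (totInfl E v / n)^2 := (sq _).symm

lemma sum_Wfun : ∑ v, Wfun E v = Zval E := by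
  set n : ℝ := (Fintype.card V : ℝ)
  have h2 : ∑ v : V, ∑ u ∈ Finset.univ.filter (fun u => E u v),
      1/(outdeg E u : ℝ) * (totInfl E u / n)^2
      = ∑ u : V, (if outdeg E u = 0 then 0 else (totInfl E u / n)^2) := by
    have e1 : ∀ v : V, ∑ u ∈ Finset.univ.filter (fun u => E u v),
        1/(outdeg E u:ℝ) * (totInfl E u / n)^2
        = ∑ u : V, if E u v then 1/(outdeg E u:ℝ) * (totInfl E u / n)^2 else 0 :=
      fun v => Finset.sum_filter _ _
    rw [Finset.sum_congr rfl (fun v _ => e1 v), Finset.sum_comm]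
    refine Finset.sum_congr rfl (fun u _ => ?_)
    rw [← Finset.sum_filter, Finset.sum_const]
    have hcard : (Finset.univ.filter (fun v => E u v)).card = outdeg E u := rfl
    rw [hcard, nsmul_eq_mul]
    rcases eq_or_ne (outdeg E u) 0 with h0 | h0
    · simp [h0]
    · rw [if_neg h0]
      have hne : (outdeg E u : ℝ) ≠ 0 := Nat.cast_ne_zero.2 h0
      field_simp
  have : ∑ v, Wfun E v
      = ∑ v : V, (totInfl E v / n)^2
        - ∑ v : V, ∑ u ∈ Finset.univ.filter (fun u => E u v),
            1/(outdeg E u : ℝ) * (totInfl E u / n)^2 := by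
    rw [← Finset.sum_sub_distrib]
    rfl
  rw [this, h2, Zval, sinks, Finset.sum_filter, ← Finset.sum_sub_distrib]
  refine Finset.sum_congr rfl (fun v _ => ?_)
  by_cases hd : outdeg E v = 0 <;> simp [hd, n]

lemma exists_sink (hm : MonotoneDigraph E) [Nonempty V] : ∃ r, r ∈ sinks E := by
  obtain ⟨r, -, hr⟩ := Finset.exists_max_image Finset.univ (totInfl E)
    ⟨Classical.arbitrary V, Finset.mem_univ _⟩
  refine ⟨r, Finset.mem_filter.2 ⟨Finset.mem_univ _, ?_⟩⟩
  by_contra h0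
  obtain ⟨w, hw⟩ : ∃ w, E r w := by
    obtain ⟨w, hw⟩ := Finset.card_pos.1 (Nat.pos_of_ne_zero h0)
    exact ⟨w, (Finset.mem_filter.1 hw).2⟩
  exact absurd (hr w (Finset.mem_univ _)) (not_le.2 (hm r w hw))

lemma Zval_nonneg : 0 ≤ Zval E :=
  Finset.sum_nonneg fun r _ => sq_nonneg _

lemma Zval_pos (hm : MonotoneDigraph E) [Nonempty V] : 0 < Zval E := by
  obtain ⟨r, hr⟩ := exists_sink E hm
  have hn : (0:ℝ) < (Fintype.card V : ℝ) := by exact_mod_cast Fintype.card_pos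
  have hterm : 0 < (totInfl E r / (Fintype.card V : ℝ))^2 := by
    have h1 : (1:ℝ) ≤ totInfl E r := one_le_totInfl E r
    have : 0 < totInfl E r / (Fintype.card V : ℝ) := div_pos (by linarith) hn
    positivity
  exact lt_of_lt_of_le hterm (Finset.single_le_sum
    (f := fun r => (totInfl E r / (Fintype.card V : ℝ))^2) (fun r _ => sq_nonneg _) hr)

end TwoPathAux
end Part5

noncomputable section Part6
variable {V : Type*} [Fintype V] [DecidableEq V]
namespace TwoPathAux
variable (E : V → V → Prop) [DecidableRel E] (v : V)

lemma outdeg_remOut_self : outdeg (remOut E v) v = 0 := by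
  rw [outdeg, Finset.card_eq_zero, Finset.filter_eq_empty_iff]
  intro b _
  exact fun hb => hb.2 rfl

lemma outdeg_remOut_of_ne {x : V} (hx : x ≠ v) : outdeg (remOut E v) x = outdeg E x := by
  rw [outdeg, outdeg]
  congr 1
  ext b
  simp only [Finset.mem_filter, Finset.mem_univ, true_and]
  exact ⟨fun h => h.1, fun h => ⟨h, hx⟩⟩

lemma pathWeight_remOut {l : List V} (hc : l.Chain' (remOut E v)) :
    pathWeight (remOut E v) l = pathWeight E l := by
  induction l with
  | nil => rfl
  | cons a t ih =>
    cases t with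
    | nil => rfl
    | cons b t' =>
      have h1 : remOut E v a b := (List.isChain_cons_cons.1 hc).1
      have h2 := (List.isChain_cons_cons.1 hc).2
      rw [pathWeight_cons_cons, pathWeight_cons_cons, ih h2,
        outdeg_remOut_of_ne E v h1.2]

lemma chain'_remOut_of_not_mem_dropLast : ∀ {l : List V}, l.Chain' E →
    (∀ a ∈ l.dropLast, a ≠ v) → l.Chain' (remOut E v) := by
  intro l
  induction l with
  | nil => intro _ _; exact List.isChain_nil
  | cons a t ih =>
    intro hc hd
    cases t with
    | nil => exact List.isChain_singleton a
    | cons b t' =>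
      have hdl : (a :: b :: t').dropLast = a :: (b :: t').dropLast := rfl
      have hane : a ≠ v := hd a (by rw [hdl]; exact List.mem_cons_self)
      refine List.isChain_cons_cons.2 ⟨⟨(List.isChain_cons_cons.1 hc).1, hane⟩,
        ih (List.isChain_cons_cons.1 hc).2 ?_⟩
      intro x hx
      exact hd x (by rw [hdl]; exact List.mem_cons_of_mem _ hx)

lemma not_mem_dropLast_of_chain'_remOut : ∀ {l : List V},
    l.Chain' (remOut E v) → ∀ a ∈ l.dropLast, a ≠ v := by
  intro l
  induction l with
  | nil => intro _ a ha; simp at ha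
  | cons a t ih =>
    intro hc x hx
    cases t with
    | nil => simp at hx
    | cons b t' =>
      have hdl : (a :: b :: t').dropLast = a :: (b :: t').dropLast := rfl
      rw [hdl] at hx
      rcases List.mem_cons.1 hx with rfl | hx
      · exact (List.isChain_cons_cons.1 hc).1.2
      · exact ih (List.isChain_cons_cons.1 hc).2 x hx

lemma pathFinset_remOut_subset (y x : V) :
    pathFinset (remOut E v) y x ⊆ pathFinset E y x := by
  intro l hl
  obtain ⟨h1, h2, h3, h4, h5⟩ := (mem_pathFinset _).1 hl
  exact (mem_pathFinset E).2 ⟨h1, List.IsChain.imp (fun _ _ hab => hab.1) h2, h3, h4, h5⟩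

lemma pathFinset_remOut_target (y : V) :
    pathFinset (remOut E v) y v = pathFinset E y v := by
  apply Finset.Subset.antisymm (pathFinset_remOut_subset E v y v)
  intro l hl
  obtain ⟨h1, h2, h3, h4, h5⟩ := (mem_pathFinset E).1 hl
  refine (mem_pathFinset _).2 ⟨h1, chain'_remOut_of_not_mem_dropLast E v h2 ?_, h3, h4, h5⟩
  intro a ha hav
  rw [hav] at ha
  have hlast' : l.getLast h1 = v := by
    rw [List.getLast?_eq_getLast h1, Option.some_inj] at h4; exact h4
  have hsp : l.dropLast ++ [v] = l := by
    conv_rhs => rw [← List.dropLast_append_getLast h1, hlast']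
  have h5' : (l.dropLast ++ [v]).Nodup := by rw [hsp]; exact h5
  rcases List.nodup_append.1 h5' with ⟨-, -, hdisj⟩
  exact hdisj v ha v (by simp) rfl

lemma infl_remOut_target (y : V) : infl (remOut E v) v y = infl E v y := by
  rw [infl, infl]
  rw [show ∑ l ∈ pathFinset (remOut E v) y v, pathWeight (remOut E v) l
      = ∑ l ∈ pathFinset (remOut E v) y v, pathWeight E l from
    Finset.sum_congr rfl (fun l hl => pathWeight_remOut E v ((mem_pathFinset _).1 hl).2.1)]
  rw [pathFinset_remOut_target]

lemma totInfl_remOut_target : totInfl (remOut E v) v = totInfl E v :=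
  Finset.sum_congr rfl (fun y _ => infl_remOut_target E v y)

lemma infl_remOut_le (x y : V) : infl (remOut E v) x y ≤ infl E x y := by
  rw [infl, infl]
  rw [show ∑ l ∈ pathFinset (remOut E v) y x, pathWeight (remOut E v) l
      = ∑ l ∈ pathFinset (remOut E v) y x, pathWeight E l from
    Finset.sum_congr rfl (fun l hl => pathWeight_remOut E v ((mem_pathFinset _).1 hl).2.1)]
  exact Finset.sum_le_sum_of_subset_of_nonneg (pathFinset_remOut_subset E v y x)
    (fun l _ _ => pathWeight_nonneg E l)

lemma totInfl_remOut_le (x : V) : totInfl (remOut E v) x ≤ totInfl E x :=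
  Finset.sum_le_sum (fun y _ => infl_remOut_le E v x y)

lemma totInfl_remOut_nonneg (x : V) : 0 ≤ totInfl (remOut E v) x :=
  totInfl_nonneg _ x

lemma Zval_remOut_sink (hv : outdeg E v = 0) : Zval (remOut E v) = Zval E := by
  have hnoedge : ∀ b, ¬ E v b := by
    intro b hb
    have hmem : b ∈ Finset.univ.filter (fun y => E v y) :=
      Finset.mem_filter.2 ⟨Finset.mem_univ _, hb⟩
    rw [Finset.card_eq_zero.1 hv] at hmem
    exact absurd hmem (Finset.notMem_empty b)
  have hchain : ∀ {l : List V}, l.Chain' E → l.Chain' (remOut E v) := by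
    intro l hl
    exact List.IsChain.imp (fun a b hab => ⟨hab, fun hav => hnoedge b (hav ▸ hab)⟩) hl
  have hpaths : ∀ y x : V, pathFinset (remOut E v) y x = pathFinset E y x := by
    intro y x
    apply Finset.Subset.antisymm (pathFinset_remOut_subset E v y x)
    intro l hl
    obtain ⟨h1, h2, h3, h4, h5⟩ := (mem_pathFinset E).1 hl
    exact (mem_pathFinset _).2 ⟨h1, hchain h2, h3, h4, h5⟩
  have hinfl : ∀ x y : V, infl (remOut E v) x y = infl E x y := by
    intro x y
    rw [infl, infl]
    rw [show ∑ l ∈ pathFinset (remOut E v) y x, pathWeight (remOut E v) l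
        = ∑ l ∈ pathFinset (remOut E v) y x, pathWeight E l from
      Finset.sum_congr rfl (fun l hl => pathWeight_remOut E v ((mem_pathFinset _).1 hl).2.1)]
    rw [hpaths]
  have hsinks : sinks (remOut E v) = sinks E := by
    ext r
    simp only [sinks, Finset.mem_filter, Finset.mem_univ, true_and]
    rcases eq_or_ne r v with rfl | hr
    · rw [outdeg_remOut_self]; simp [hv]
    · rw [outdeg_remOut_of_ne E v hr]
  rw [Zval, Zval, hsinks]
  refine Finset.sum_congr rfl (fun r _ => ?_)
  rw [show totInfl (remOut E v) r = totInfl E r from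
    Finset.sum_congr rfl (fun y _ => hinfl r y)]

end TwoPathAux
end Part6

noncomputable section Part6b
variable {V : Type*} [Fintype V] [DecidableEq V]
namespace TwoPathAux
variable (E : V → V → Prop) [DecidableRel E] (v : V)

set_option maxHeartbeats 1000000 in
lemma sum_through_le (y r : V) :
    ∑ l ∈ (pathFinset E y r).filter (fun l => v ∈ l), pathWeight E l
      ≤ infl E v y * infl E r v := by
  classical
  set F := (pathFinset E y r).filter (fun l => v ∈ l) with hF
  set φ : List V → List V × List V :=
    fun l => (l.take (l.idxOf v + 1), l.drop (l.idxOf v)) with hφ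
  have hrecomb : ∀ l : List V, (φ l).1 ++ (φ l).2.tail = l := by
    intro l
    rw [hφ]; dsimp only
    rw [List.tail_drop, List.take_append_drop]
  have hmem : ∀ l ∈ F, (φ l).1 ∈ pathFinset E y v ∧ (φ l).2 ∈ pathFinset E v r := by
    intro l hlF
    obtain ⟨hl, hvl⟩ := Finset.mem_filter.1 hlF
    obtain ⟨h1, h2, h3, h4, h5⟩ := (mem_pathFinset E).1 hl
    have hi : l.idxOf v < l.length := List.idxOf_lt_length_iff.2 hvl
    have hgetElem : l[l.idxOf v]'hi = v := by
      simpa using List.idxOf_get hi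
    rw [hφ]; dsimp only
    constructor
    · have htake : l.take (l.idxOf v + 1) = l.take (l.idxOf v) ++ [v] := by
        rw [← List.take_concat_get hi, List.concat_eq_append, hgetElem]
      refine (mem_pathFinset E).2 ⟨?_, List.IsChain.take h2 _, ?_, ?_, (List.take_sublist _ _).nodup h5⟩
      · rw [htake]; simp
      · obtain ⟨a, t, rfl⟩ : ∃ a t, l = a :: t := by
          cases l with
          | nil => exact absurd rfl h1
          | cons a t => exact ⟨a, t, rfl⟩
        rw [List.take_succ_cons]
        simpa using h3
      · rw [htake]; exact List.getLast?_concat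
    · have hdrop : l.drop (l.idxOf v) = v :: l.drop (l.idxOf v + 1) := by
        rw [List.drop_eq_getElem_cons hi, hgetElem]
      refine (mem_pathFinset E).2 ⟨?_, List.IsChain.drop h2 _, ?_, ?_, (List.drop_sublist _ _).nodup h5⟩
      · rw [hdrop]; simp
      · rw [hdrop]; rfl
      · have hne : l.drop (l.idxOf v) ≠ [] := by rw [hdrop]; simp
        have hkey : l.getLast? = (l.drop (l.idxOf v)).getLast? := by
          conv_lhs => rw [← List.take_append_drop (l.idxOf v) l]
          rw [List.getLast?_append, List.getLast?_eq_getLast hne]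
          rfl
        rw [← hkey]; exact h4
  have hw : ∀ l ∈ F, pathWeight E l = pathWeight E (φ l).1 * pathWeight E (φ l).2 := by
    intro l hlF
    obtain ⟨hl, hvl⟩ := Finset.mem_filter.1 hlF
    rw [hφ]; dsimp only
    exact pathWeight_take_drop E _ l (List.idxOf_lt_length_iff.2 hvl)
  have hinj : ∀ l₁ ∈ F, ∀ l₂ ∈ F, φ l₁ = φ l₂ → l₁ = l₂ := by
    intro l₁ _ l₂ _ heq
    rw [← hrecomb l₁, ← hrecomb l₂, heq]
  calc ∑ l ∈ F, pathWeight E l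
      = ∑ l ∈ F, pathWeight E (φ l).1 * pathWeight E (φ l).2 :=
        Finset.sum_congr rfl hw
  _ = ∑ p ∈ F.image φ, pathWeight E p.1 * pathWeight E p.2 :=
        (Finset.sum_image (f := fun p : List V × List V => pathWeight E p.1 * pathWeight E p.2) hinj).symm
  _ ≤ ∑ p ∈ (pathFinset E y v) ×ˢ (pathFinset E v r),
        pathWeight E p.1 * pathWeight E p.2 := by
      refine Finset.sum_le_sum_of_subset_of_nonneg ?_ ?_
      · intro p hp
        obtain ⟨l, hlF, rfl⟩ := Finset.mem_image.1 hp
        exact Finset.mem_product.2 (hmem l hlF)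
      · intro p _ _
        exact mul_nonneg (pathWeight_nonneg E _) (pathWeight_nonneg E _)
  _ = infl E v y * infl E r v := by
      rw [Finset.sum_product, infl, infl, Finset.sum_mul_sum]

lemma infl_sub_remOut_le {r : V} (hrv : r ≠ v) (y : V) :
    infl E r y - infl (remOut E v) r y ≤ infl E v y * infl E r v := by
  have hset : pathFinset (remOut E v) y r = (pathFinset E y r).filter (fun l => v ∉ l) := by
    ext l
    constructor
    · intro hl
      refine Finset.mem_filter.2 ⟨pathFinset_remOut_subset E v y r hl, ?_⟩
      intro hvl
      obtain ⟨h1, h2, h3, h4, h5⟩ := (mem_pathFinset _).1 hl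
      have hlast' : l.getLast h1 = r := by
        rw [List.getLast?_eq_getLast h1, Option.some_inj] at h4; exact h4
      have hsp : l.dropLast ++ [r] = l := by
        conv_rhs => rw [← List.dropLast_append_getLast h1, hlast']
      have hvdl : v ∈ l.dropLast := by
        have hvl' := hvl
        rw [← hsp] at hvl'
        rcases List.mem_append.1 hvl' with hh | hh
        · exact hh
        · simp only [List.mem_singleton] at hh
          exact absurd hh.symm hrv
      exact (not_mem_dropLast_of_chain'_remOut E v h2 v hvdl) rfl
    · intro hl
      obtain ⟨hmem, hnv⟩ := Finset.mem_filter.1 hl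
      obtain ⟨h1, h2, h3, h4, h5⟩ := (mem_pathFinset E).1 hmem
      refine (mem_pathFinset _).2 ⟨h1, chain'_remOut_of_not_mem_dropLast E v h2 ?_, h3, h4, h5⟩
      intro a ha hav
      rw [hav] at ha
      exact hnv ((List.dropLast_sublist l).subset ha)
  have hE' : infl (remOut E v) r y
      = ∑ l ∈ (pathFinset E y r).filter (fun l => v ∉ l), pathWeight E l := by
    rw [infl,
      show ∑ l ∈ pathFinset (remOut E v) y r, pathWeight (remOut E v) l
        = ∑ l ∈ pathFinset (remOut E v) y r, pathWeight E l from
      Finset.sum_congr rfl (fun l hl => pathWeight_remOut E v ((mem_pathFinset _).1 hl).2.1),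
      hset]
  have hsplit := Finset.sum_filter_add_sum_filter_not (pathFinset E y r)
    (fun l => v ∈ l) (pathWeight E)
  have hfull : infl E r y
      = (∑ l ∈ (pathFinset E y r).filter (fun l => v ∈ l), pathWeight E l)
        + ∑ l ∈ (pathFinset E y r).filter (fun l => v ∉ l), pathWeight E l := by
    rw [infl, ← hsplit]
  have hthrough := sum_through_le E v y r
  linarith [hE', hfull, hthrough]

lemma Zval_le_Zval_remOut_add (h : Acyclic E) :
    Zval E ≤ Zval (remOut E v) + 2 * totInfl E v / (Fintype.card V : ℝ) := by
  have hn : (0:ℝ) < (Fintype.card V : ℝ) := by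
    exact_mod_cast Fintype.card_pos_iff.2 ⟨v⟩
  set n : ℝ := (Fintype.card V : ℝ) with hndef
  have hIv0 : 0 ≤ totInfl E v := totInfl_nonneg E v
  rcases eq_or_ne (outdeg E v) 0 with hv | hv
  · rw [Zval_remOut_sink E v hv]
    have : 0 ≤ 2 * totInfl E v / n := by positivity
    linarith
  · have hvs : v ∉ sinks E := by
      simp only [sinks, Finset.mem_filter, Finset.mem_univ, true_and]
      exact hv
    have hsinks : sinks (remOut E v) = insert v (sinks E) := by
      ext x
      simp only [sinks, Finset.mem_filter, Finset.mem_univ, true_and, Finset.mem_insert]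
      rcases eq_or_ne x v with hx | hx
      · rw [hx, outdeg_remOut_self E v]
        simp [hx]
      · rw [outdeg_remOut_of_ne E v hx]
        simp [hx]
    have hZ' : Zval (remOut E v) = (totInfl E v / n)^2
        + ∑ x ∈ sinks E, (totInfl (remOut E v) x / n)^2 := by
      rw [Zval, hsinks, Finset.sum_insert hvs, totInfl_remOut_target E v]
    have hper : ∀ x ∈ sinks E, (totInfl E x / n)^2 - (totInfl (remOut E v) x / n)^2
        ≤ 2/n * (totInfl E x - totInfl (remOut E v) x) := by
      intro x _
      set A := totInfl E x
      set B := totInfl (remOut E v) x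
      have hBA : B ≤ A := totInfl_remOut_le E v x
      have hB0 : 0 ≤ B := totInfl_nonneg _ x
      have hAn : A ≤ n := totInfl_le_card E h x
      have key : A^2 - B^2 ≤ 2*n*(A-B) := by nlinarith
      have e1 : (A/n)^2 - (B/n)^2 = (A^2 - B^2)/n^2 := by
        rw [div_pow, div_pow, div_sub_div_same]
      calc (A/n)^2 - (B/n)^2 = (A^2 - B^2)/n^2 := e1
      _ ≤ (2*n*(A-B))/n^2 := by
          rw [div_eq_mul_inv, div_eq_mul_inv]
          exact mul_le_mul_of_nonneg_right key (by positivity)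
      _ = 2/n * (A-B) := by field_simp
    have hdiff : ∀ x ∈ sinks E, totInfl E x - totInfl (remOut E v) x
        ≤ totInfl E v * infl E x v := by
      intro x hx
      have hxv : x ≠ v := fun hh => hvs (hh ▸ hx)
      rw [totInfl, totInfl, ← Finset.sum_sub_distrib]
      calc ∑ y, (infl E x y - infl (remOut E v) x y)
          ≤ ∑ y, infl E v y * infl E x v :=
            Finset.sum_le_sum (fun y _ => infl_sub_remOut_le E v hxv y)
      _ = totInfl E v * infl E x v := by rw [← Finset.sum_mul, totInfl]
    have hsum : ∑ x ∈ sinks E, (totInfl E x - totInfl (remOut E v) x) ≤ totInfl E v := by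
      calc ∑ x ∈ sinks E, (totInfl E x - totInfl (remOut E v) x)
          ≤ ∑ x ∈ sinks E, totInfl E v * infl E x v := Finset.sum_le_sum hdiff
      _ = totInfl E v * ∑ x ∈ sinks E, infl E x v := (Finset.mul_sum _ _ _).symm
      _ ≤ totInfl E v * 1 :=
          mul_le_mul_of_nonneg_left (sum_sinks_infl_le_one E h v) hIv0
      _ = totInfl E v := mul_one _
    have hmain : Zval E - ∑ x ∈ sinks E, (totInfl (remOut E v) x / n)^2
        ≤ 2/n * totInfl E v := by
      rw [Zval, ← Finset.sum_sub_distrib]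
      calc ∑ x ∈ sinks E, ((totInfl E x / n)^2 - (totInfl (remOut E v) x / n)^2)
          ≤ ∑ x ∈ sinks E, 2/n * (totInfl E x - totInfl (remOut E v) x) :=
            Finset.sum_le_sum hper
      _ = 2/n * ∑ x ∈ sinks E, (totInfl E x - totInfl (remOut E v) x) :=
            (Finset.mul_sum _ _ _).symm
      _ ≤ 2/n * totInfl E v := mul_le_mul_of_nonneg_left hsum (by positivity)
    have hsq : 0 ≤ (totInfl E v / n)^2 := sq_nonneg _
    have hrw : 2/n * totInfl E v = 2 * totInfl E v / n := by ring
    linarith [hZ', hmain]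

end TwoPathAux
end Part6b

/-- In a monotone finite DAG, the analytic Two Path mechanism
`Pr(v) = Z(v) / (Z_v + 2 I(v)/n)` defines a (sub)probability distribution:
the probabilities sum to at most one. -/
theorem analytic_two_path_subprobability {V : Type*} [Fintype V] [DecidableEq V]
    (E : V → V → Prop) [DecidableRel E] (hacyc : Acyclic E)
    (hmono : MonotoneDigraph E) :
    ∑ v : V, Zfun E v /
        (Zval (remOut E v) + 2 * totInfl E v / (Fintype.card V : ℝ)) ≤ 1 := by
  classical
  rcases isEmpty_or_nonempty V with hV | hV
  · rw [Finset.univ_eq_empty, Finset.sum_empty]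
    norm_num
  · set n : ℝ := (Fintype.card V : ℝ) with hndef
    have hZpos : 0 < Zval E := TwoPathAux.Zval_pos E hmono
    have hterm : ∀ v : V, Zfun E v / (Zval (remOut E v) + 2 * totInfl E v / n)
        ≤ TwoPathAux.Wfun E v / Zval E := by
      intro v
      have hD : Zval E ≤ Zval (remOut E v) + 2 * totInfl E v / n :=
        TwoPathAux.Zval_le_Zval_remOut_add E v hacyc
      have hDpos : 0 < Zval (remOut E v) + 2 * totInfl E v / n :=
        lt_of_lt_of_le hZpos hD
      have hZW : Zfun E v ≤ TwoPathAux.Wfun E v := TwoPathAux.Zfun_le_Wfun E hacyc v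
      have hW0 : 0 ≤ TwoPathAux.Wfun E v := TwoPathAux.Wfun_nonneg E hacyc hmono v
      rcases le_or_gt (Zfun E v) 0 with hz | hz
      · calc Zfun E v / (Zval (remOut E v) + 2 * totInfl E v / n) ≤ 0 :=
            div_nonpos_iff.2 (Or.inr ⟨hz, hDpos.le⟩)
        _ ≤ TwoPathAux.Wfun E v / Zval E := div_nonneg hW0 hZpos.le
      · calc Zfun E v / (Zval (remOut E v) + 2 * totInfl E v / n)
            ≤ Zfun E v / Zval E := div_le_div_of_nonneg_left hz.le hZpos hD
        _ ≤ TwoPathAux.Wfun E v / Zval E := by gcongr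
    calc ∑ v : V, Zfun E v / (Zval (remOut E v) + 2 * totInfl E v / n)
        ≤ ∑ v : V, TwoPathAux.Wfun E v / Zval E :=
          Finset.sum_le_sum (fun v _ => hterm v)
    _ = (∑ v : V, TwoPathAux.Wfun E v) / Zval E := by rw [Finset.sum_div]
    _ = Zval E / Zval E := by rw [TwoPathAux.sum_Wfun]
    _ = 1 := div_self hZpos.ne'
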